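/- Let d ≥ 1 and let (ν_ε)_{ε>0} be a family of finite nonzero positive Borel measures on ℝ^d with ν_ε({0}) = 0. Assume that for every R > 0, ν_ε({x : |x| > R}) / ν_ε(ℝ^d) → 1 as ε → 0⁺. Then for every Borel set E ⊂ ℝ^d of finite Lebesgue measure, lim_{ε→0⁺} (ν_ε(ℝ^d))^{−1} Per_{ν_ε}(E) = |E|. -/

import Mathlib

open MeasureTheory Filter Topology ENNReal

/-- The non-local `ν`-perimeter: `Per_ν(E) = ∫_E ν(Eᶜ − x) dx`. -/
noncomputable def nuPer {d : ℕ} (ν : Measure (EuclideanSpace ℝ (Fin d)))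
    (E : Set (EuclideanSpace ℝ (Fin d))) : ℝ≥0∞ :=
  ∫⁻ x in E, ν {y | x + y ∈ Eᶜ}

section aux

variable {d : ℕ}

lemma meas_slice (ν : Measure (EuclideanSpace ℝ (Fin d))) [SFinite ν]
    {A : Set (EuclideanSpace ℝ (Fin d))} (hA : MeasurableSet A) :
    Measurable fun x : EuclideanSpace ℝ (Fin d) => ν {y | x + y ∈ A} := by
  have h : MeasurableSet {p : EuclideanSpace ℝ (Fin d) × EuclideanSpace ℝ (Fin d) |
      p.1 + p.2 ∈ A} := (measurable_fst.add measurable_snd) hA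
  exact measurable_measure_prodMk_left h

lemma tonelli_slice (ν : Measure (EuclideanSpace ℝ (Fin d))) [SFinite ν]
    {A : Set (EuclideanSpace ℝ (Fin d))} (hA : MeasurableSet A) :
    ∫⁻ x, ν {y | x + y ∈ A} = volume A * ν Set.univ := by
  have hmeas : Measurable fun p : EuclideanSpace ℝ (Fin d) × EuclideanSpace ℝ (Fin d) =>
      A.indicator (fun _ => (1 : ℝ≥0∞)) (p.1 + p.2) :=
    (measurable_one.indicator hA).comp (measurable_fst.add measurable_snd)
  have h1 : ∀ x : EuclideanSpace ℝ (Fin d), ν {y | x + y ∈ A}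
      = ∫⁻ y, A.indicator (fun _ => (1 : ℝ≥0∞)) (x + y) ∂ν := by
    intro x
    have hp : ∀ y : EuclideanSpace ℝ (Fin d), A.indicator (fun _ => (1 : ℝ≥0∞)) (x + y)
        = ((fun y => x + y) ⁻¹' A).indicator (fun _ => (1 : ℝ≥0∞)) y := by
      intro y
      by_cases h : x + y ∈ A <;> simp [Set.indicator, h, Set.mem_preimage]
    simp_rw [hp]
    exact (lintegral_indicator_one (hA.preimage (measurable_const_add x))).symm
  calc ∫⁻ x, ν {y | x + y ∈ A}
      = ∫⁻ x, ∫⁻ y, A.indicator (fun _ => (1 : ℝ≥0∞)) (x + y) ∂ν := by simp_rw [h1]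
    _ = ∫⁻ y, ∫⁻ x, A.indicator (fun _ => (1 : ℝ≥0∞)) (x + y) ∂volume ∂ν :=
        lintegral_lintegral_swap hmeas.aemeasurable
    _ = ∫⁻ _, volume A ∂ν := by
        refine lintegral_congr fun y => ?_
        have hp : ∀ x : EuclideanSpace ℝ (Fin d), A.indicator (fun _ => (1 : ℝ≥0∞)) (x + y)
            = ((fun x => x + y) ⁻¹' A).indicator (fun _ => (1 : ℝ≥0∞)) x := by
          intro x
          by_cases h : x + y ∈ A <;> simp [Set.indicator, h, Set.mem_preimage]
        simp_rw [hp]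
        calc ∫⁻ x, ((fun x => x + y) ⁻¹' A).indicator (fun _ => (1 : ℝ≥0∞)) x
            = volume ((fun x => x + y) ⁻¹' A) :=
              lintegral_indicator_one (hA.preimage (measurable_add_const y))
          _ = volume A := measure_preimage_add_right volume y A
    _ = volume A * ν Set.univ := by rw [lintegral_const]

lemma key_bound (ν : Measure (EuclideanSpace ℝ (Fin d))) [IsFiniteMeasure ν]
    {E : Set (EuclideanSpace ℝ (Fin d))} (hE : MeasurableSet E) (M : ℝ) :
    ∫⁻ x in E, ν {y | x + y ∈ E} ≤
      2 * (ν Set.univ * volume (E \ Metric.closedBall 0 M)) +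
        ν {x | ‖x‖ ≤ 2 * M} * volume E := by
  set A := E \ Metric.closedBall 0 M with hA
  set K := E ∩ Metric.closedBall 0 M with hK
  have hAm : MeasurableSet A := hE.diff measurableSet_closedBall
  have hKm : MeasurableSet K := hE.inter measurableSet_closedBall
  have hsplit : E = K ∪ A := (Set.inter_union_diff E _).symm
  have hdisj : Disjoint K A := Set.disjoint_sdiff_inter.symm
  have hboundA : ∫⁻ x in A, ν {y | x + y ∈ E} ≤ ν Set.univ * volume A := by
    calc ∫⁻ x in A, ν {y | x + y ∈ E}
        ≤ ∫⁻ _ in A, ν Set.univ := lintegral_mono fun x => measure_mono (Set.subset_univ _)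
      _ = ν Set.univ * volume A := setLIntegral_const _ _
  have hsub : ∀ x ∈ K, {y | x + y ∈ E} ⊆ {y : EuclideanSpace ℝ (Fin d) | ‖y‖ ≤ 2 * M}
      ∪ {y | x + y ∈ A} := by
    intro x hx y hy
    by_cases hb : x + y ∈ Metric.closedBall (0 : EuclideanSpace ℝ (Fin d)) M
    · left
      have hx' : ‖x‖ ≤ M := by
        simpa [Metric.mem_closedBall, dist_zero_right] using hx.2
      have hxy : ‖x + y‖ ≤ M := by
        simpa [Metric.mem_closedBall, dist_zero_right] using hb
      have h2 : ‖y‖ ≤ ‖x + y‖ + ‖x‖ := by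
        calc ‖y‖ = ‖x + y - x‖ := by rw [add_sub_cancel_left]
          _ ≤ ‖x + y‖ + ‖x‖ := norm_sub_le _ _
      simp only [Set.mem_setOf_eq]
      linarith
    · right
      exact ⟨hy, hb⟩
  have hboundK : ∫⁻ x in K, ν {y | x + y ∈ E} ≤
      ν {x | ‖x‖ ≤ 2 * M} * volume E + ν Set.univ * volume A := by
    have hmono : ∫⁻ x in K, ν {y | x + y ∈ E} ≤
        ∫⁻ x in K, (ν {y : EuclideanSpace ℝ (Fin d) | ‖y‖ ≤ 2 * M} + ν {y | x + y ∈ A}) := by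
      refine setLIntegral_mono (measurable_const.add (meas_slice ν hAm)) ?_
      exact fun x hx => (measure_mono (hsub x hx)).trans (measure_union_le _ _)
    calc ∫⁻ x in K, ν {y | x + y ∈ E}
        ≤ ∫⁻ x in K, (ν {y : EuclideanSpace ℝ (Fin d) | ‖y‖ ≤ 2 * M}
            + ν {y | x + y ∈ A}) := hmono
      _ = ν {y : EuclideanSpace ℝ (Fin d) | ‖y‖ ≤ 2 * M} * volume K
            + ∫⁻ x in K, ν {y | x + y ∈ A} := by
          rw [lintegral_add_left measurable_const, setLIntegral_const]
      _ ≤ ν {y : EuclideanSpace ℝ (Fin d) | ‖y‖ ≤ 2 * M} * volume E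
            + ν Set.univ * volume A := by
          refine add_le_add (mul_le_mul_right (measure_mono Set.inter_subset_left) _) ?_
          calc ∫⁻ x in K, ν {y | x + y ∈ A}
              ≤ ∫⁻ x, ν {y | x + y ∈ A} := setLIntegral_le_lintegral _ _
            _ = volume A * ν Set.univ := tonelli_slice ν hAm
            _ = ν Set.univ * volume A := mul_comm _ _
  have hunion := lintegral_union (μ := volume)
    (f := fun x => ν {y | x + y ∈ E}) hAm hdisj
  rw [← hsplit] at hunion
  rw [hunion]
  calc (∫⁻ x in K, ν {y | x + y ∈ E}) + ∫⁻ x in A, ν {y | x + y ∈ E}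
      ≤ (ν {x | ‖x‖ ≤ 2 * M} * volume E + ν Set.univ * volume A)
          + ν Set.univ * volume A := add_le_add hboundK hboundA
    _ = 2 * (ν Set.univ * volume A) + ν {x | ‖x‖ ≤ 2 * M} * volume E := by ring

end aux

/-- For a family of finite nonzero measures `(ν_ε)` with no atom at `0` whose
normalized mass concentrates at infinity, `(ν_ε(ℝ^d))⁻¹ Per_{ν_ε}(E) → |E|` for
every Borel set `E` of finite Lebesgue measure. -/
theorem statement11 {d : ℕ} (hd : 1 ≤ d)
    (ν : ℝ → Measure (EuclideanSpace ℝ (Fin d)))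
    (hν0 : ∀ ε > (0 : ℝ), ν ε {0} = 0)
    (hfin : ∀ ε > (0 : ℝ), ν ε Set.univ < ⊤)
    (hpos : ∀ ε > (0 : ℝ), ν ε Set.univ ≠ 0)
    (htail : ∀ R > (0 : ℝ),
      Tendsto (fun ε => ν ε {x | R < ‖x‖} / ν ε Set.univ) (𝓝[>] (0 : ℝ)) (𝓝 1))
    (E : Set (EuclideanSpace ℝ (Fin d)))
    (hE : MeasurableSet E) (hEvol : volume E < ⊤) :
    Tendsto (fun ε => (ν ε Set.univ)⁻¹ * nuPer (ν ε) E) (𝓝[>] (0 : ℝ))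
      (𝓝 (volume E)) := by
  have hEvol' : volume E ≠ ⊤ := hEvol.ne
  have hsliceSet : ∀ x : EuclideanSpace ℝ (Fin d),
      MeasurableSet {y : EuclideanSpace ℝ (Fin d) | x + y ∈ E} :=
    fun x => hE.preimage (measurable_const_add x)
  -- Step 1: rewrite the normalized perimeter
  have heq : ∀ ε ∈ Set.Ioi (0 : ℝ),
      (ν ε Set.univ)⁻¹ * nuPer (ν ε) E
        = volume E - (ν ε Set.univ)⁻¹ * ∫⁻ x in E, ν ε {y | x + y ∈ E} := by
    intro ε hε
    haveI : IsFiniteMeasure (ν ε) := ⟨hfin ε hε⟩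
    have hc0 : ν ε Set.univ ≠ 0 := hpos ε hε
    have hctop : ν ε Set.univ ≠ ⊤ := (hfin ε hε).ne
    have hIle : (∫⁻ x in E, ν ε {y | x + y ∈ E}) ≤ ν ε Set.univ * volume E := by
      calc (∫⁻ x in E, ν ε {y | x + y ∈ E})
          ≤ ∫⁻ _ in E, ν ε Set.univ :=
            lintegral_mono fun x => measure_mono (Set.subset_univ _)
        _ = ν ε Set.univ * volume E := setLIntegral_const _ _
    have hItop : (∫⁻ x in E, ν ε {y | x + y ∈ E}) ≠ ⊤ :=
      (hIle.trans_lt (ENNReal.mul_lt_top (hfin ε hε) hEvol)).ne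
    have h1 : nuPer (ν ε) E
        = ν ε Set.univ * volume E - ∫⁻ x in E, ν ε {y | x + y ∈ E} := by
      have hpt : ∀ x : EuclideanSpace ℝ (Fin d),
          ν ε {y | x + y ∈ Eᶜ} = ν ε Set.univ - ν ε {y | x + y ∈ E} := by
        intro x
        have hset : {y : EuclideanSpace ℝ (Fin d) | x + y ∈ Eᶜ} = {y | x + y ∈ E}ᶜ := rfl
        rw [hset, measure_compl (hsliceSet x) (measure_ne_top _ _)]
      unfold nuPer
      simp_rw [hpt]
      rw [lintegral_sub (meas_slice (ν ε) hE) hItop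
        (Filter.Eventually.of_forall fun x => measure_mono (Set.subset_univ _)),
        setLIntegral_const]
    rw [h1, ENNReal.mul_sub fun _ _ => ENNReal.inv_ne_top.2 hc0, ← mul_assoc,
      ENNReal.inv_mul_cancel hc0 hctop, one_mul]
  -- Step 2: the error term tends to 0
  have hJ : Tendsto (fun ε => (ν ε Set.univ)⁻¹ * ∫⁻ x in E, ν ε {y | x + y ∈ E})
      (𝓝[>] (0 : ℝ)) (𝓝 0) := by
    rw [ENNReal.tendsto_nhds_zero]
    intro δ hδ
    have h4 : (0 : ℝ≥0∞) < δ / 2 / 2 :=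
      ENNReal.div_pos (ENNReal.div_pos hδ.ne' ENNReal.ofNat_ne_top).ne' ENNReal.ofNat_ne_top
    -- choose the truncation radius
    have hshrink : Tendsto
        (fun n : ℕ => volume (E \ Metric.closedBall (0 : EuclideanSpace ℝ (Fin d)) n))
        atTop (𝓝 0) := by
      have h0 : (⋂ n : ℕ, E \ Metric.closedBall (0 : EuclideanSpace ℝ (Fin d)) n) = ∅ := by
        refine Set.eq_empty_iff_forall_notMem.2 fun x hx => ?_
        obtain ⟨n, hn⟩ := exists_nat_ge ‖x‖
        exact (Set.mem_iInter.1 hx n).2 (by simpa [Metric.mem_closedBall, dist_zero_right])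
      have ht := tendsto_measure_iInter_atTop (μ := volume)
        (s := fun n : ℕ => E \ Metric.closedBall (0 : EuclideanSpace ℝ (Fin d)) n)
        (fun n => (hE.diff measurableSet_closedBall).nullMeasurableSet)
        (fun m n hmn => Set.diff_subset_diff_right
          (Metric.closedBall_subset_closedBall (by exact_mod_cast hmn)))
        ⟨0, ((measure_mono Set.diff_subset).trans_lt hEvol).ne⟩
      rw [h0] at ht
      simpa [Function.comp_def] using ht
    obtain ⟨n, hn⟩ := (ENNReal.tendsto_nhds_zero.1 hshrink (δ / 2 / 2) h4).exists
    set M : ℝ := (n : ℝ) + 1 with hM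
    have hMpos : (0 : ℝ) < M := by positivity
    have hvolA : volume (E \ Metric.closedBall (0 : EuclideanSpace ℝ (Fin d)) M) ≤ δ / 2 / 2 :=
      le_trans (measure_mono (Set.diff_subset_diff_right
        (Metric.closedBall_subset_closedBall (by rw [hM]; linarith)))) hn
    -- the small-ball normalized mass tends to 0
    have hs : Tendsto (fun ε => ν ε {x | ‖x‖ ≤ 2 * M} / ν ε Set.univ)
        (𝓝[>] (0 : ℝ)) (𝓝 0) := by
      have ht := htail (2 * M) (by positivity)
      have heq2 : ∀ ε ∈ Set.Ioi (0 : ℝ), ν ε {x | ‖x‖ ≤ 2 * M} / ν ε Set.univ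
          = 1 - ν ε {x | 2 * M < ‖x‖} / ν ε Set.univ := by
        intro ε hε
        haveI : IsFiniteMeasure (ν ε) := ⟨hfin ε hε⟩
        have hmeasR : MeasurableSet {x : EuclideanSpace ℝ (Fin d) | 2 * M < ‖x‖} :=
          measurableSet_lt measurable_const measurable_norm
        have hcompl : {x : EuclideanSpace ℝ (Fin d) | 2 * M < ‖x‖}ᶜ
            = {x | ‖x‖ ≤ 2 * M} := by
          ext x; simp [not_lt]
        have hadd : ν ε {x | ‖x‖ ≤ 2 * M} / ν ε Set.univ
            + ν ε {x | 2 * M < ‖x‖} / ν ε Set.univ = 1 := by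
          rw [ENNReal.div_add_div_same, ← hcompl, add_comm,
            measure_add_measure_compl hmeasR,
            ENNReal.div_self (hpos ε hε) (hfin ε hε).ne]
        have hb_top : ν ε {x | 2 * M < ‖x‖} / ν ε Set.univ ≠ ⊤ :=
          (ENNReal.div_lt_top (measure_ne_top _ _) (hpos ε hε)).ne
        exact ENNReal.eq_sub_of_add_eq hb_top hadd
      have hsub := ENNReal.Tendsto.sub (tendsto_const_nhds (x := (1:ℝ≥0∞)) (f := 𝓝[>] (0:ℝ)) (α := ℝ))
        ht (Or.inl ENNReal.one_ne_top)
      rw [tsub_self] at hsub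
      exact hsub.congr' (eventually_mem_nhdsWithin.mono fun ε hε => (heq2 ε hε).symm)
    -- the pointwise bound
    have hbound : ∀ ε ∈ Set.Ioi (0 : ℝ),
        (ν ε Set.univ)⁻¹ * (∫⁻ x in E, ν ε {y | x + y ∈ E}) ≤
          δ / 2 + volume E * (ν ε {x | ‖x‖ ≤ 2 * M} / ν ε Set.univ) := by
      intro ε hε
      haveI : IsFiniteMeasure (ν ε) := ⟨hfin ε hε⟩
      have hc0 : ν ε Set.univ ≠ 0 := hpos ε hε
      have hctop : ν ε Set.univ ≠ ⊤ := (hfin ε hε).ne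
      calc (ν ε Set.univ)⁻¹ * (∫⁻ x in E, ν ε {y | x + y ∈ E})
          ≤ (ν ε Set.univ)⁻¹ *
            (2 * (ν ε Set.univ * volume (E \ Metric.closedBall 0 M))
              + ν ε {x | ‖x‖ ≤ 2 * M} * volume E) :=
            mul_le_mul_right (key_bound (ν ε) hE M) _
        _ = 2 * volume (E \ Metric.closedBall 0 M) * ((ν ε Set.univ)⁻¹ * ν ε Set.univ)
              + volume E * (ν ε {x | ‖x‖ ≤ 2 * M} / ν ε Set.univ) := by
            simp only [div_eq_mul_inv]; ring
        _ = 2 * volume (E \ Metric.closedBall 0 M)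
              + volume E * (ν ε {x | ‖x‖ ≤ 2 * M} / ν ε Set.univ) := by
            rw [ENNReal.inv_mul_cancel hc0 hctop, mul_one]
        _ ≤ 2 * (δ / 2 / 2)
              + volume E * (ν ε {x | ‖x‖ ≤ 2 * M} / ν ε Set.univ) := by
            gcongr
        _ = δ / 2 + volume E * (ν ε {x | ‖x‖ ≤ 2 * M} / ν ε Set.univ) := by
            rw [two_mul, ENNReal.add_halves]
    have hconst : Tendsto (fun ε => volume E * (ν ε {x | ‖x‖ ≤ 2 * M} / ν ε Set.univ))
        (𝓝[>] (0 : ℝ)) (𝓝 0) := by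
      have := ENNReal.Tendsto.const_mul hs (Or.inr hEvol')
      simpa using this
    have hev := ENNReal.tendsto_nhds_zero.1 hconst (δ / 2)
      (ENNReal.div_pos hδ.ne' ENNReal.ofNat_ne_top)
    filter_upwards [eventually_mem_nhdsWithin, hev] with ε hε h2
    calc (ν ε Set.univ)⁻¹ * ∫⁻ x in E, ν ε {y | x + y ∈ E}
        ≤ δ / 2 + volume E * (ν ε {x | ‖x‖ ≤ 2 * M} / ν ε Set.univ) := hbound ε hε
      _ ≤ δ / 2 + δ / 2 := add_le_add_right h2 _
      _ = δ := ENNReal.add_halves δ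
  -- Step 3: conclude
  have hfinal : Tendsto
      (fun ε => volume E - (ν ε Set.univ)⁻¹ * ∫⁻ x in E, ν ε {y | x + y ∈ E})
      (𝓝[>] (0 : ℝ)) (𝓝 (volume E)) := by
    have := ENNReal.Tendsto.sub (tendsto_const_nhds (x := volume E) (f := 𝓝[>] (0:ℝ)) (α := ℝ)) hJ (Or.inl hEvol')
    simpa using this
  exact hfinal.congr' (eventually_mem_nhdsWithin.mono fun ε hε => (heq ε hε).symm)
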